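/- Let G be an abelian group and g₁, g₂ : ℝⁿ → G (n ≥ 2) two orthogonally additive functions (gᵢ(x+y) = gᵢ(x) + gᵢ(y) whenever ⟨x,y⟩ = 0). If g₁ and g₂ agree outside a set of Lebesgue measure zero in ℝⁿ, then g₁ = g₂. -/

import Mathlib

open MeasureTheory
open scoped RealInnerProductSpace

section OrthAuxUnique

variable {n : ℕ} {G : Type*} [AddCommGroup G] {f : EuclideanSpace ℝ (Fin n) → G}

lemma aux_f0 (hf : ∀ x y : EuclideanSpace ℝ (Fin n), ⟪x, y⟫ = 0 → f (x + y) = f x + f y) :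
    f 0 = 0 := by
  have h := hf 0 0 (by simp)
  rw [add_zero] at h
  exact (left_eq_add.mp h)

lemma aux_E_eq (hf : ∀ x y : EuclideanSpace ℝ (Fin n), ⟪x, y⟫ = 0 → f (x + y) = f x + f y)
    {u v : EuclideanSpace ℝ (Fin n)} (h : ‖u‖ = ‖v‖) :
    f u + f (-u) = f v + f (-v) := by
  -- helper : for any p q with ‖p‖ = ‖q‖,
  --   f (p+p) + f (-(p+p)) = (f (p+q) + f (-(p+q))) + (f (p-q) + f (-(p-q)))
  have helper : ∀ p q : EuclideanSpace ℝ (Fin n), ‖p‖ = ‖q‖ →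
      f (p + p) + f (-(p + p)) =
        (f (p + q) + f (-(p + q))) + (f (p - q) + f (-(p - q))) := by
    intro p q hpq
    have horth : ⟪p + q, p - q⟫ = 0 := (real_inner_add_sub_eq_zero_iff p q).2 hpq
    have h1 : f (p + p) = f (p + q) + f (p - q) := by
      have := hf (p + q) (p - q) horth
      rw [show (p + q) + (p - q) = p + p by abel] at this
      exact this
    have h2 : f (-(p + p)) = f (-(p + q)) + f (-(p - q)) := by
      have horth' : ⟪-(p + q), -(p - q)⟫ = 0 := by rw [inner_neg_neg]; exact horth
      have := hf (-(p + q)) (-(p - q)) horth'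
      rw [show (-(p + q)) + (-(p - q)) = -(p + p) by abel] at this
      exact this
    rw [h1, h2]; abel
  set p := (2⁻¹ : ℝ) • u with hp
  set q := (2⁻¹ : ℝ) • v with hq
  have hpq : ‖p‖ = ‖q‖ := by rw [hp, hq, norm_smul, norm_smul, h]
  have hu : p + p = u := by rw [hp, ← add_smul]; norm_num
  have hv : q + q = v := by rw [hq, ← add_smul]; norm_num
  have e1 := helper p q hpq
  have e2 := helper q p hpq.symm
  rw [hu] at e1
  rw [hv] at e2
  rw [show q + p = p + q by abel, show q - p = -(p - q) by abel, neg_neg] at e2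
  rw [e1, e2]; abel

noncomputable def psiF {n : ℕ} {G : Type*} [AddCommGroup G]
    (f : EuclideanSpace ℝ (Fin n) → G) (hn : 0 < n) (s : ℝ) : G :=
  f (Real.sqrt s • EuclideanSpace.single (⟨0, hn⟩ : Fin n) (1 : ℝ)) +
    f (-(Real.sqrt s • EuclideanSpace.single (⟨0, hn⟩ : Fin n) (1 : ℝ)))

lemma psiF_spec (hf : ∀ x y : EuclideanSpace ℝ (Fin n), ⟪x, y⟫ = 0 → f (x + y) = f x + f y)
    (hn : 0 < n) (z : EuclideanSpace ℝ (Fin n)) :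
    f z + f (-z) = psiF f hn (‖z‖ ^ 2) := by
  apply aux_E_eq hf
  rw [norm_smul, EuclideanSpace.norm_single, Real.norm_eq_abs, abs_of_nonneg (Real.sqrt_nonneg _),
    Real.sqrt_sq (norm_nonneg z)]
  norm_num

lemma psiF_add (hf : ∀ x y : EuclideanSpace ℝ (Fin n), ⟪x, y⟫ = 0 → f (x + y) = f x + f y)
    (hn : 2 ≤ n) (h0 : 0 < n) {s t : ℝ} (hs : 0 ≤ s) (ht : 0 ≤ t) :
    psiF f h0 (s + t) = psiF f h0 s + psiF f h0 t := by
  set e₀ : EuclideanSpace ℝ (Fin n) := EuclideanSpace.single (⟨0, h0⟩ : Fin n) (1 : ℝ) with he₀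
  set e₁ : EuclideanSpace ℝ (Fin n) := EuclideanSpace.single (⟨1, by omega⟩ : Fin n) (1 : ℝ) with he₁
  set x := Real.sqrt s • e₀ with hx
  set y := Real.sqrt t • e₁ with hy
  have hinner : ⟪x, y⟫ = 0 := by
    rw [hx, hy, real_inner_smul_left, real_inner_smul_right, he₀, he₁,
      EuclideanSpace.inner_single_left]
    simp [EuclideanSpace.single_apply]
  have hxy : f (x + y) = f x + f y := hf x y hinner
  have hxy' : f (-(x + y)) = f (-x) + f (-y) := by
    have : ⟪-x, -y⟫ = 0 := by rw [inner_neg_neg]; exact hinner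
    have h := hf (-x) (-y) this
    rw [show -x + -y = -(x+y) by abel] at h
    exact h
  have hnx : ‖x‖^2 = s := by
    rw [hx, norm_smul, EuclideanSpace.norm_single]
    simp [mul_pow, Real.sq_sqrt hs]
  have hny : ‖y‖^2 = t := by
    rw [hy, norm_smul, EuclideanSpace.norm_single]
    simp [mul_pow, Real.sq_sqrt ht]
  have hnxy : ‖x + y‖^2 = s + t := by
    rw [@norm_add_sq_real, hnx, hny, hinner]; ring
  have e1 : f (x + y) + f (-(x + y)) = psiF f h0 (s + t) := by
    rw [← hnxy]; exact psiF_spec hf h0 (x + y)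
  have e2 : f x + f (-x) = psiF f h0 s := by rw [← hnx]; exact psiF_spec hf h0 x
  have e3 : f y + f (-y) = psiF f h0 t := by rw [← hny]; exact psiF_spec hf h0 y
  rw [← e1, ← e2, ← e3, hxy, hxy']; abel

lemma psiF_zero (hf : ∀ x y : EuclideanSpace ℝ (Fin n), ⟪x, y⟫ = 0 → f (x + y) = f x + f y)
    (h0 : 0 < n) : psiF f h0 0 = 0 := by
  unfold psiF
  rw [Real.sqrt_zero, zero_smul, neg_zero, aux_f0 hf, add_zero]

lemma psiF_null (hn : 2 ≤ n) (h0 : 0 < n)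
    (hf : ∀ x y : EuclideanSpace ℝ (Fin n), ⟪x, y⟫ = 0 → f (x + y) = f x + f y)
    (hnull : volume {x : EuclideanSpace ℝ (Fin n) | f x ≠ 0} = 0) :
    ∀ s : ℝ, 0 ≤ s → psiF f h0 s = 0 := by
  obtain ⟨m, rfl⟩ : ∃ m, n = m + 1 := ⟨n - 1, by omega⟩
  -- symmetrized measurable null superset
  have hneg : volume {x : EuclideanSpace ℝ (Fin (m+1)) | f (-x) ≠ 0} = 0 := by
    have heq : {x : EuclideanSpace ℝ (Fin (m+1)) | f (-x) ≠ 0}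
        = -{x : EuclideanSpace ℝ (Fin (m+1)) | f x ≠ 0} := rfl
    rw [heq, Measure.measure_neg]
    exact hnull
  obtain ⟨M, hsub, hMmeas, hMnull⟩ :=
    exists_measurable_superset_of_null (measure_union_null hnull hneg)
  have hpsiM : ∀ z : EuclideanSpace ℝ (Fin (m+1)), z ∉ M → psiF f h0 (‖z‖^2) = 0 := by
    intro z hz
    rw [← psiF_spec hf h0 z]
    have h1 : f z = 0 := by
      by_contra hc; exact hz (hsub (Or.inl hc))
    have h2 : f (-z) = 0 := by
      by_contra hc; exact hz (hsub (Or.inr hc))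
    rw [h1, h2, add_zero]
  -- transfer to ℝ × (Fin m → ℝ)
  set Φ : ℝ × (Fin m → ℝ) → EuclideanSpace ℝ (Fin (m+1)) :=
    fun p => (MeasurableEquiv.toLp 2 (Fin (m+1) → ℝ))
      ((MeasurableEquiv.piFinSuccAbove (fun _ : Fin (m+1) => ℝ) 0).symm p) with hΦdef
  have hΦ : MeasurePreserving Φ (volume : Measure (ℝ × (Fin m → ℝ))) volume := by
    have h1 := (EuclideanSpace.volume_preserving_symm_measurableEquiv_toLp (Fin (m+1))).symm
    have h2 := (measurePreserving_piFinSuccAbove (fun _ : Fin (m+1) => (volume : Measure ℝ)) 0).symm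
    have h3 := h1.comp h2
    rw [hΦdef]
    have hv1 : (volume : Measure (Fin (m+1) → ℝ)) = Measure.pi fun _ => volume := volume_pi
    have hv2 : (volume : Measure (ℝ × (Fin m → ℝ)))
        = (volume : Measure ℝ).prod (Measure.pi fun _ => volume) := by
      rw [Measure.volume_eq_prod, volume_pi]
    rw [hv2]
    exact h3
  set K : Set (ℝ × (Fin m → ℝ)) := Φ ⁻¹' M with hKdef
  have hKmeas : MeasurableSet K := hΦ.measurable hMmeas
  have hKnull : volume K = 0 := by
    rw [hKdef, hΦ.measure_preimage hMmeas.nullMeasurableSet]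
    exact hMnull
  -- a.e. slice over second coordinate
  have hKs : volume (Prod.swap ⁻¹' K : Set ((Fin m → ℝ) × ℝ)) = 0 := by
    rw [Measure.volume_eq_prod,
      Measure.measurePreserving_swap.measure_preimage hKmeas.nullMeasurableSet]
    rw [← Measure.volume_eq_prod]
    exact hKnull
  have hslice : ∀ᵐ c : (Fin m → ℝ), volume {t : ℝ | (t, c) ∈ K} = 0 := by
    rw [Measure.volume_eq_prod] at hKs
    have := (Measure.measure_prod_null (hKmeas.preimage measurable_swap)).mp hKs
    filter_upwards [this] with c hc
    exact hc
  -- norm computation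
  have hnorm : ∀ (t : ℝ) (c : Fin m → ℝ), ‖Φ (t, c)‖^2 = t^2 + ∑ i, (c i)^2 := by
    intro t c
    rw [EuclideanSpace.norm_eq, Real.sq_sqrt (by positivity)]
    have h : ∀ j, (Φ (t, c)) j = (Fin.cons t c : ∀ _ : Fin (m+1), ℝ) j := by
      intro j
      simp [hΦdef, MeasurableEquiv.piFinSuccAbove_symm_apply, Fin.insertNth_zero]
    simp only [h, Real.norm_eq_abs, sq_abs]
    rw [Fin.sum_univ_succ]
    simp
  intro s hs0
  rcases eq_or_lt_of_le hs0 with hs | hs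
  · rw [← hs]; exact psiF_zero hf h0
  -- choose a good c with small norm
  have hGoodc : ∃ c : Fin m → ℝ, (∑ i, (c i)^2) < s/4 ∧ volume {t : ℝ | (t, c) ∈ K} = 0 := by
    by_contra hcon
    push_neg at hcon
    have hU : IsOpen {c : Fin m → ℝ | (∑ i, (c i)^2) < s/4} := by
      apply isOpen_lt (by fun_prop) continuous_const
    have hsubU : {c : Fin m → ℝ | (∑ i, (c i)^2) < s/4}
        ⊆ {c | ¬ volume {t : ℝ | (t, c) ∈ K} = 0} := fun c hc => by
      intro h; exact absurd h (hcon c hc)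
    have h1 := measure_mono_null hsubU (ae_iff.mp hslice)
    have h2 : ({c : Fin m → ℝ | (∑ i, (c i)^2) < s/4}).Nonempty := ⟨0, by simp; positivity⟩
    exact absurd h1 (hU.measure_ne_zero volume h2)
  obtain ⟨c, hcsmall, hcnull⟩ := hGoodc
  set c₀ := ∑ i, (c i)^2 with hc₀def
  have hc₀0 : 0 ≤ c₀ := by positivity
  set A := {t : ℝ | (t, c) ∈ K} with hAdef
  have hgoodt : ∀ t : ℝ, t ∉ A → psiF f h0 (t^2 + c₀) = 0 := by
    intro t ht
    have : Φ (t, c) ∉ M := ht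
    have := hpsiM _ this
    rwa [hnorm t c] at this
  -- image of A under t ↦ t^2 + c₀ is null
  set B := (fun t : ℝ => t^2 + c₀) '' (A ∩ Set.Icc 0 (Real.sqrt s)) with hBdef
  have hBnull : volume B = 0 := by
    have hlip : LipschitzOnWith (2 * Real.sqrt s).toNNReal (fun t : ℝ => t^2 + c₀)
        (Set.Icc 0 (Real.sqrt s)) := by
      apply LipschitzOnWith.of_dist_le_mul
      intro x hx y hy
      rw [Real.dist_eq, Real.dist_eq, Real.coe_toNNReal _ (by positivity)]
      obtain ⟨hx0, hx1⟩ := hx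
      obtain ⟨hy0, hy1⟩ := hy
      have : x^2 + c₀ - (y^2 + c₀) = (x + y) * (x - y) := by ring
      rw [this, abs_mul]
      apply mul_le_mul_of_nonneg_right _ (abs_nonneg _)
      rw [abs_of_nonneg (by linarith)]
      linarith
    have him := (hlip.mono (Set.inter_subset_right (s := A))).hausdorffMeasure_image_le (d := 1) (by norm_num)
    rw [ENNReal.rpow_one] at him
    rw [← hausdorffMeasure_real]
    refine le_antisymm (him.trans ?_) zero_le
    rw [hausdorffMeasure_real]
    have : volume (A ∩ Set.Icc 0 (Real.sqrt s)) = 0 :=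
      measure_mono_null Set.inter_subset_left hcnull
    rw [this, mul_zero]
  set Bad := B ∪ (fun u : ℝ => s - u) ⁻¹' B with hBaddef
  have hBadnull : volume Bad = 0 := by
    apply measure_union_null hBnull
    have hpre : (fun u : ℝ => s - u) ⁻¹' B = Neg.neg ⁻¹' ((fun v : ℝ => s + v) ⁻¹' B) := by
      ext u; simp [sub_eq_add_neg]
    rw [hpre]
    have h1 : volume ((fun v : ℝ => s + v) ⁻¹' B) = volume B :=
      measure_preimage_add volume s B
    have h2 : Neg.neg ⁻¹' ((fun v : ℝ => s + v) ⁻¹' B) = -((fun v : ℝ => s + v) ⁻¹' B) := rfl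
    rw [h2, Measure.measure_neg, h1]
    exact hBnull
  have hInotnull : volume (Set.Icc (3*s/8) (s/2)) ≠ 0 := by
    rw [Real.volume_Icc]
    simp only [ne_eq, ENNReal.ofReal_eq_zero, not_le]
    linarith
  have hnsub : ¬ (Set.Icc (3*s/8) (s/2) ⊆ Bad) :=
    fun hsubI => hInotnull (measure_mono_null hsubI hBadnull)
  obtain ⟨s₁, hs₁I, hs₁Bad⟩ := Set.not_subset.mp hnsub
  obtain ⟨hs₁l, hs₁r⟩ := hs₁I
  have hs₁B : s₁ ∉ B := fun h => hs₁Bad (Or.inl h)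
  have hs₂B : s - s₁ ∉ B := fun h => hs₁Bad (Or.inr h)
  have goodval : ∀ u : ℝ, c₀ ≤ u → u ≤ s → u ∉ B → psiF f h0 u = 0 := by
    intro u hu1 hu2 huB
    set t := Real.sqrt (u - c₀) with htdef
    have ht0 : 0 ≤ t := Real.sqrt_nonneg _
    have htsq : t^2 + c₀ = u := by
      rw [htdef, Real.sq_sqrt (by linarith)]; ring
    have htle : t ≤ Real.sqrt s := by
      apply Real.sqrt_le_sqrt; linarith
    have htA : t ∉ A := by
      intro htA
      exact huB ⟨t, ⟨htA, ht0, htle⟩, htsq⟩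
    have hcon := hgoodt t htA
    rwa [htsq] at hcon
  have hg1 : psiF f h0 s₁ = 0 := goodval s₁ (by linarith) (by linarith) hs₁B
  have hg2 : psiF f h0 (s - s₁) = 0 := goodval (s - s₁) (by linarith) (by linarith) hs₂B
  have hfin := psiF_add hf hn h0 (s := s₁) (t := s - s₁) (by linarith) (by linarith)
  rw [show s₁ + (s - s₁) = s by ring] at hfin
  rw [hfin, hg1, hg2, add_zero]

lemma aux_exists_orth (hn : 2 ≤ n) {x : EuclideanSpace ℝ (Fin n)} (hx : x ≠ 0) :
    ∃ w : EuclideanSpace ℝ (Fin n), ⟪x, w⟫ = 0 ∧ ‖w‖ = ‖x‖ := by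
  have hne : ((ℝ ∙ x)ᗮ : Submodule ℝ (EuclideanSpace ℝ (Fin n))) ≠ ⊥ := by
    intro hbot
    have htop : (ℝ ∙ x) = ⊤ := by
      have := Submodule.orthogonal_eq_bot_iff (K := ℝ ∙ x) |>.mp hbot
      exact this
    have h1 : Module.finrank ℝ (ℝ ∙ x) = 1 := finrank_span_singleton hx
    rw [htop, finrank_top] at h1
    rw [finrank_euclideanSpace_fin] at h1
    omega
  obtain ⟨w₀, hw₀mem, hw₀ne⟩ := Submodule.ne_bot_iff _ |>.mp hne
  have hinner : ⟪x, w₀⟫ = 0 :=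
    (Submodule.mem_orthogonal _ _).mp hw₀mem x (Submodule.mem_span_singleton_self x)
  refine ⟨(‖x‖ / ‖w₀‖) • w₀, ?_, ?_⟩
  · rw [real_inner_smul_right, hinner, mul_zero]
  · rw [norm_smul, Real.norm_eq_abs, abs_of_nonneg (by positivity)]
    field_simp

lemma aux_smul_nonneg (hn : 2 ≤ n)
    (hf : ∀ x y : EuclideanSpace ℝ (Fin n), ⟪x, y⟫ = 0 → f (x + y) = f x + f y)
    (hodd : ∀ x : EuclideanSpace ℝ (Fin n), f (-x) = - f x)
    (x : EuclideanSpace ℝ (Fin n)) (a b : ℝ) (hab : 0 ≤ a * b) :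
    f ((a + b) • x) = f (a • x) + f (b • x) := by
  rcases eq_or_ne x 0 with rfl | hx
  · simp only [smul_zero]
    have h0 : f (0 : EuclideanSpace ℝ (Fin n)) = 0 := by
      have h := hf 0 0 (by simp)
      rw [add_zero] at h
      exact left_eq_add.mp h
    rw [h0]; abel
  obtain ⟨w, hw, hwn⟩ := aux_exists_orth hn hx
  set c := Real.sqrt (a * b) with hcdef
  have hc2 : c^2 = a * b := Real.sq_sqrt hab
  set u := a • x + c • w with hudef
  set v := b • x + (-c) • w with hvdef
  have hxw : ⟪w, x⟫ = 0 := by rw [real_inner_comm]; exact hw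
  have huv : ⟪u, v⟫ = 0 := by
    rw [hudef, hvdef]
    rw [inner_add_left, inner_add_right, inner_add_right]
    rw [real_inner_smul_left, real_inner_smul_left, real_inner_smul_left, real_inner_smul_left,
      real_inner_smul_right, real_inner_smul_right, real_inner_smul_right, real_inner_smul_right]
    rw [hw, hxw, real_inner_self_eq_norm_sq, real_inner_self_eq_norm_sq, hwn]
    nlinarith [hc2]
  have hsum : u + v = (a + b) • x := by
    rw [hudef, hvdef, add_smul]
    module
  have horth1 : ⟪a • x, c • w⟫ = 0 := by
    rw [real_inner_smul_left, real_inner_smul_right, hw]; ring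
  have horth2 : ⟪b • x, (-c) • w⟫ = 0 := by
    rw [real_inner_smul_left, real_inner_smul_right, hw]; ring
  have h1 : f u = f (a • x) + f (c • w) := hf _ _ horth1
  have h2 : f v = f (b • x) + f ((-c) • w) := hf _ _ horth2
  have h3 : f ((-c) • w) = - f (c • w) := by
    rw [show (-c) • w = -(c • w) by module, hodd]
  rw [← hsum, hf u v huv, h1, h2, h3]
  abel

lemma aux_smul (hn : 2 ≤ n)
    (hf : ∀ x y : EuclideanSpace ℝ (Fin n), ⟪x, y⟫ = 0 → f (x + y) = f x + f y)
    (hodd : ∀ x : EuclideanSpace ℝ (Fin n), f (-x) = - f x)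
    (x : EuclideanSpace ℝ (Fin n)) (a b : ℝ) :
    f ((a + b) • x) = f (a • x) + f (b • x) := by
  rcases le_or_gt 0 (a * b) with hab | hab
  · exact aux_smul_nonneg hn hf hodd x a b hab
  rcases le_or_gt ((a + b) * b) 0 with h1 | h1
  · have := aux_smul_nonneg hn hf hodd x (a + b) (-b) (by nlinarith)
    rw [show (a + b) + (-b) = a by ring] at this
    have hb : f ((-b) • x) = - f (b • x) := by
      rw [show (-b) • x = -(b • x) by module, hodd]
    rw [this, hb]
    abel
  · have h2 : (a + b) * a ≤ 0 := by nlinarith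
    have := aux_smul_nonneg hn hf hodd x (a + b) (-a) (by nlinarith)
    rw [show (a + b) + (-a) = b by ring] at this
    have ha : f ((-a) • x) = - f (a • x) := by
      rw [show (-a) • x = -(a • x) by module, hodd]
    rw [this, ha]
    abel

lemma aux_add (hn : 2 ≤ n)
    (hf : ∀ x y : EuclideanSpace ℝ (Fin n), ⟪x, y⟫ = 0 → f (x + y) = f x + f y)
    (hodd : ∀ x : EuclideanSpace ℝ (Fin n), f (-x) = - f x)
    (x y : EuclideanSpace ℝ (Fin n)) :
    f (x + y) = f x + f y := by
  rcases eq_or_ne x 0 with rfl | hx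
  · rw [zero_add]
    have h0 : f (0 : EuclideanSpace ℝ (Fin n)) = 0 := by
      have h := hf 0 0 (by simp)
      rw [add_zero] at h
      exact left_eq_add.mp h
    rw [h0, zero_add]
  set α := ⟪x, y⟫ / ‖x‖^2 with hαdef
  set z := y - α • x with hzdef
  have hnx : ‖x‖^2 ≠ 0 := by
    simpa using hx
  have hxz : ⟪x, z⟫ = 0 := by
    rw [hzdef, inner_sub_right, real_inner_smul_right, real_inner_self_eq_norm_sq, hαdef]
    field_simp
    ring
  have hy : y = α • x + z := by rw [hzdef]; module
  have h1 : ⟪(1 + α) • x, z⟫ = 0 := by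
    rw [real_inner_smul_left, hxz, mul_zero]
  have h2 : ⟪α • x, z⟫ = 0 := by
    rw [real_inner_smul_left, hxz, mul_zero]
  have key : x + y = (1 + α) • x + z := by rw [hy]; module
  rw [key, hf _ _ h1]
  have := aux_smul hn hf hodd x 1 α
  rw [one_smul] at this
  rw [this, hy, hf _ _ h2]
  abel

end OrthAuxUnique

theorem orthogonally_additive_unique (n : ℕ) (hn : 2 ≤ n)
    {G : Type*} [AddCommGroup G]
    (g₁ g₂ : EuclideanSpace ℝ (Fin n) → G)
    (h₁ : ∀ x y : EuclideanSpace ℝ (Fin n), ⟪x, y⟫ = 0 → g₁ (x + y) = g₁ x + g₁ y)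
    (h₂ : ∀ x y : EuclideanSpace ℝ (Fin n), ⟪x, y⟫ = 0 → g₂ (x + y) = g₂ x + g₂ y)
    (hae : ∀ᵐ x ∂(volume : Measure (EuclideanSpace ℝ (Fin n))), g₁ x = g₂ x) :
    g₁ = g₂ := by
  classical
  set f : EuclideanSpace ℝ (Fin n) → G := fun x => g₁ x - g₂ x with hfdef
  have hf : ∀ x y : EuclideanSpace ℝ (Fin n), ⟪x, y⟫ = 0 → f (x + y) = f x + f y := by
    intro x y h
    simp only [hfdef]
    rw [h₁ x y h, h₂ x y h]
    abel
  have hnull : volume {x : EuclideanSpace ℝ (Fin n) | f x ≠ 0} = 0 := by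
    have hss : {x : EuclideanSpace ℝ (Fin n) | f x ≠ 0} ⊆ {x | ¬ g₁ x = g₂ x} := by
      intro x hx h
      exact hx (by simp [hfdef, h])
    exact measure_mono_null hss (ae_iff.mp hae)
  have h0 : 0 < n := by omega
  have hodd : ∀ x : EuclideanSpace ℝ (Fin n), f (-x) = - f x := by
    intro x
    have h1 := psiF_spec hf h0 x
    rw [psiF_null hn h0 hf hnull (‖x‖^2) (by positivity)] at h1
    exact eq_neg_of_add_eq_zero_right h1
  have hadd := aux_add hn hf hodd
  funext x
  have hx : f x = 0 := by
    have hnull2 : volume ((fun t : EuclideanSpace ℝ (Fin n) => x + t) ⁻¹'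
        {y : EuclideanSpace ℝ (Fin n) | f y ≠ 0}) = 0 := by
      rw [measure_preimage_add]
      exact hnull
    have hU : ({y : EuclideanSpace ℝ (Fin n) | f y ≠ 0} ∪
        (fun t => x + t) ⁻¹' {y | f y ≠ 0}) ≠ Set.univ := by
      intro hU
      have hz := measure_union_null hnull hnull2
      rw [hU] at hz
      exact (isOpen_univ.measure_ne_zero (volume : Measure (EuclideanSpace ℝ (Fin n)))
        ⟨0, trivial⟩) hz
    obtain ⟨t, ht⟩ := Set.ne_univ_iff_exists_notMem _ |>.mp hU
    have ht1 : f t = 0 := by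
      by_contra hc
      exact ht (Or.inl hc)
    have ht2 : f (x + t) = 0 := by
      by_contra hc
      exact ht (Or.inr hc)
    have h3 := hadd x t
    rw [ht1, ht2, add_zero] at h3
    exact h3.symm
  have : g₁ x - g₂ x = 0 := hx
  exact sub_eq_zero.mp this
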